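/- arXiv:2012.03766 — 3 statements merged into one kernel-verified Lean document; each statement's English description precedes it below -/
import Mathlib

section
/- Given two finite disjoint sets of items X and Y, each with total cost at most B, an additive valuation v, and a parameter k with every item having cost at most B/k^4, there exists a set Z ⊆ X ∪ Y with c(Z) ≤ B and v(Z) ≥ (1 − c(Y)/B − 1/k^4)·v(X) + v(Y). -/
open Finset

lemma exists_budget_subset_aux {ι : Type*} [DecidableEq ι]
    (c v : ι → ℝ) (hc : ∀ j, 0 ≤ c j) (hv : ∀ j, 0 ≤ v j)
    (b m : ℝ) (hm : 0 ≤ m) (hmb : m ≤ b) :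
    ∀ S : Finset ι, (∀ j ∈ S, c j ≤ m) →
      ∃ T ⊆ S, ∑ j ∈ T, c j ≤ b ∧
        (b - m) * ∑ j ∈ S, v j ≤ (∑ j ∈ T, v j) * max (∑ j ∈ S, c j) b := by
  intro S
  induction S using Finset.strongInduction with
  | _ S ih =>
    intro hs
    by_cases hSb : ∑ j ∈ S, c j ≤ b
    · refine ⟨S, le_refl _, hSb, ?_⟩
      rw [max_eq_right hSb]
      have hvS : (0:ℝ) ≤ ∑ j ∈ S, v j := Finset.sum_nonneg fun j _ => hv j
      nlinarith
    push_neg at hSb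
    have hcS0 : (0:ℝ) < ∑ j ∈ S, c j := lt_of_le_of_lt (le_trans hm hmb) hSb
    have hne : S.Nonempty := by
      rcases S.eq_empty_or_nonempty with h | h
      · rw [h, Finset.sum_empty] at hcS0; exact absurd hcS0 (lt_irrefl 0)
      · exact h
    set cS := ∑ j ∈ S, c j with hcSdef
    set vS := ∑ j ∈ S, v j with hvSdef
    -- find minimum-density element
    have hex : ∃ j ∈ S, v j * cS ≤ c j * vS := by
      by_contra hcon
      push_neg at hcon
      have : ∑ j ∈ S, c j * vS < ∑ j ∈ S, v j * cS :=
        Finset.sum_lt_sum_of_nonempty hne hcon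
      rw [← Finset.sum_mul, ← Finset.sum_mul] at this
      nlinarith
    obtain ⟨j, hjS, hj⟩ := hex
    set S' := S.erase j with hS'
    have hsubS' : S' ⊂ S := Finset.erase_ssubset hjS
    have hcS' : ∑ i ∈ S', c i = cS - c j := by
      rw [hS', Finset.sum_erase_eq_sub hjS]
    have hvS' : ∑ i ∈ S', v i = vS - v j := by
      rw [hS', Finset.sum_erase_eq_sub hjS]
    have hvS0 : (0:ℝ) ≤ vS := Finset.sum_nonneg fun i _ => hv i
    have hcjm : c j ≤ m := hs j hjS
    have key : vS * (cS - c j) ≤ (vS - v j) * cS := by nlinarith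
    by_cases hS'b : ∑ i ∈ S', c i ≤ b
    · refine ⟨S', Finset.erase_subset _ _, hS'b, ?_⟩
      rw [max_eq_left (le_of_lt hSb), hvS']
      have h1 : (b - m) * vS ≤ (cS - c j) * vS := by nlinarith
      nlinarith
    · obtain ⟨T, hTS', hTc, hTv⟩ := ih S' hsubS' (fun i hi => hs i (Finset.mem_of_mem_erase hi))
      refine ⟨T, hTS'.trans (Finset.erase_subset _ _), hTc, ?_⟩
      have hvT : (0:ℝ) ≤ ∑ i ∈ T, v i := Finset.sum_nonneg fun i _ => hv i
      rw [max_eq_left (le_of_lt hSb)]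
      push_neg at hS'b
      rw [max_eq_left (le_of_lt hS'b), hcS', hvS'] at hTv
      have hcS'pos : (0:ℝ) < cS - c j := by rw [← hcS']; exact lt_of_le_of_lt (le_trans hm hmb) hS'b
      have hbm : (0:ℝ) ≤ b - m := by linarith
      -- vT cS ≥ vT (cS-cj) * cS/(cS-cj) ... do directly:
      -- (b-m) vS * (cS - cj) ≤ (b-m)(vS-vj) cS ≤ vT (cS-cj) cS
      have h1 : (b - m) * vS * (cS - c j) ≤ (b - m) * ((vS - v j) * cS) := by nlinarith
      have h2 : (b - m) * ((vS - v j) * cS) ≤ (∑ i ∈ T, v i) * (cS - c j) * cS := by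
        have hcSpos : (0:ℝ) < cS := hcS0
        nlinarith
      have := le_trans h1 h2
      have hfinal : (b - m) * vS * (cS - c j) ≤ (∑ i ∈ T, v i) * cS * (cS - c j) := by
        nlinarith
      exact le_of_mul_le_mul_right (by linarith [hfinal]) hcS'pos

/-- Given disjoint sets `X`, `Y` each of cost at most `B`, with every item of cost
at most `B/k⁴`, there is `Z ⊆ X ∪ Y` with `c(Z) ≤ B` and
`v(Z) ≥ (1 − c(Y)/B − 1/k⁴)·v(X) + v(Y)`. -/
theorem exists_merged_budget_subset {ι : Type*} [DecidableEq ι]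
    (X Y : Finset ι) (hXY : Disjoint X Y) (c v : ι → ℝ)
    (hc : ∀ j, 0 ≤ c j) (hv : ∀ j, 0 ≤ v j)
    (B k : ℝ) (hB : 0 < B) (hk : 1 ≤ k)
    (hcX : ∑ j ∈ X, c j ≤ B) (hcY : ∑ j ∈ Y, c j ≤ B)
    (hsmall : ∀ j ∈ X ∪ Y, c j ≤ B / k ^ 4) :
    ∃ Z ⊆ X ∪ Y, ∑ j ∈ Z, c j ≤ B ∧
      (1 - (∑ j ∈ Y, c j) / B - 1 / k ^ 4) * (∑ j ∈ X, v j) + ∑ j ∈ Y, v j ≤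
        ∑ j ∈ Z, v j := by
  have hk0 : (0:ℝ) < k ^ 4 := by positivity
  have hvX : (0:ℝ) ≤ ∑ j ∈ X, v j := Finset.sum_nonneg fun j _ => hv j
  have hcY0 : (0:ℝ) ≤ ∑ j ∈ Y, c j := Finset.sum_nonneg fun j _ => hc j
  set t := 1 - (∑ j ∈ Y, c j) / B - 1 / k ^ 4 with ht
  by_cases htpos : t ≤ 0
  · refine ⟨Y, Finset.subset_union_right, hcY, ?_⟩
    nlinarith
  · push_neg at htpos
    set b := B - ∑ j ∈ Y, c j with hb
    set m := B / k ^ 4 with hmdef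
    have hm0 : (0:ℝ) ≤ m := by positivity
    have hmb : m ≤ b := by
      rw [hb, hmdef]
      have : 0 < (1 - (∑ j ∈ Y, c j) / B - 1 / k ^ 4) * B := by
        exact mul_pos htpos hB
      have h2 : (1 - (∑ j ∈ Y, c j) / B - 1 / k ^ 4) * B
          = B - (∑ j ∈ Y, c j) - B / k ^ 4 := by
        field_simp
      linarith [h2 ▸ this]
    obtain ⟨T, hTX, hTc, hTv⟩ := exists_budget_subset_aux c v hc hv b m hm0 hmb X
      (fun j hj => hsmall j (Finset.mem_union_left _ hj))
    have hmaxB : max (∑ j ∈ X, c j) b ≤ B := by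
      apply max_le hcX; rw [hb]; linarith
    have hvT : (0:ℝ) ≤ ∑ j ∈ T, v j := Finset.sum_nonneg fun j _ => hv j
    have h3 : (b - m) * ∑ j ∈ X, v j ≤ (∑ j ∈ T, v j) * B :=
      hTv.trans (by nlinarith)
    have h4 : t * ∑ j ∈ X, v j ≤ ∑ j ∈ T, v j := by
      have hbm : b - m = t * B := by
        rw [hb, hmdef, ht]; field_simp
      rw [hbm] at h3
      have := (mul_le_mul_iff_of_pos_right hB).mp (by linarith [h3] : t * (∑ j ∈ X, v j) * B ≤ (∑ j ∈ T, v j) * B)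
      linarith [this]
    have hdisj : Disjoint T Y := hXY.mono_left hTX
    refine ⟨T ∪ Y, Finset.union_subset_union hTX (le_refl _), ?_, ?_⟩
    · rw [Finset.sum_union hdisj]; rw [hb] at hTc; linarith
    · rw [Finset.sum_union hdisj]; linarith
end

section
/- Any set T of items, each with value less than V/k^3 (where V is a fixed reference value) and each with cost at most B/k^4, can be partitioned into k (integral) sets Y'_1, ..., Y'_k such that each set satisfies v(Y'_i) ≤ v(T)/k + 4V/k^3 and c(Y'_i) ≤ c(T)/k + 4B/k^4. -/
open Finset

private def vhead {ι : Type*} (v : ι → ℝ) : List ι → ℝ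
  | [] => 0
  | a :: _ => v a

private lemma light_aux {ι : Type*} [DecidableEq ι] (c v : ι → ℝ) (k : ℕ) (hk : 0 < k)
    (cmax : ℝ) (hcmax : 0 ≤ cmax) :
    ∀ (n : ℕ) (l : List ι), l.length ≤ n → l.Nodup →
      l.Pairwise (fun a b => v b ≤ v a) →
      (∀ j ∈ l, 0 ≤ v j) → (∀ j ∈ l, 0 ≤ c j) → (∀ j ∈ l, c j ≤ cmax) →
      ∃ Y : Fin k → Finset ι,
        (∀ i, Y i ⊆ l.toFinset) ∧
        (∀ i i', i ≠ i' → Disjoint (Y i) (Y i')) ∧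
        Finset.univ.biUnion Y = l.toFinset ∧
        (∀ i i', ∑ j ∈ Y i, v j ≤ ∑ j ∈ Y i', v j + vhead v l) ∧
        (∀ i i', ∑ j ∈ Y i, c j ≤ ∑ j ∈ Y i', c j + cmax) := by
  intro n
  induction n with
  | zero =>
    intro l hlen _ _ _ _ _
    have hl : l = [] := List.eq_nil_of_length_eq_zero (Nat.le_zero.mp hlen)
    subst hl
    exact ⟨fun _ => ∅, by simp, by simp, by simp [Finset.eq_empty_iff_forall_notMem],
      by simp [vhead], by simp [hcmax]⟩
  | succ n IH =>
    intro l hlen hnd hsort hv0 hc0 hcm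
    match l with
    | [] =>
      exact ⟨fun _ => ∅, by simp, by simp, by simp [Finset.eq_empty_iff_forall_notMem],
        by simp [vhead], by simp [hcmax]⟩
    | a :: t =>
    set l : List ι := a :: t with hl
    set blk : List ι := l.take k with hblk
    set rest : List ι := l.drop k with hrest
    have hsplit : blk ++ rest = l := List.take_append_drop k l
    have hpw : l.Pairwise (fun a b => v b ≤ v a) := hsort
    rw [← hsplit, List.pairwise_append] at hpw
    obtain ⟨hpblk, hprest, hcross⟩ := hpw
    have hndapp : (blk ++ rest).Nodup := by rw [hsplit]; exact hnd
    rw [List.nodup_append] at hndapp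
    obtain ⟨hndblk, hndrest, hdisjbr⟩ := hndapp
    set blk' : List ι := List.insertionSort (fun a b => c b ≤ c a) blk with hblk'
    have hperm : List.Perm blk' blk := List.perm_insertionSort _ blk
    have hsortc : blk'.Pairwise (fun a b => c b ≤ c a) := by
      haveI : IsTotal ι (fun a b => c b ≤ c a) := ⟨fun a b => le_total (c b) (c a)⟩
      haveI : IsTrans ι (fun a b => c b ≤ c a) := ⟨fun _ _ _ h1 h2 => le_trans h2 h1⟩
      exact List.pairwise_insertionSort _ blk
    have hndblk' : blk'.Nodup := hperm.nodup_iff.mpr hndblk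
    have hmem_blk' : ∀ j ∈ blk', j ∈ blk := fun j hj => hperm.mem_iff.mp hj
    have hmem_blk_l : ∀ j ∈ blk, j ∈ l := fun j hj => by
      rw [← hsplit]; exact List.mem_append_left _ hj
    have hlen_blk' : blk'.length ≤ k := by
      rw [List.length_insertionSort, List.length_take]
      exact min_le_left _ _
    have hrest_len : rest.length ≤ n := by
      have h1 : rest.length = l.length - k := by rw [hrest, List.length_drop]
      have h2 : l.length = t.length + 1 := by simp [hl]
      omega
    obtain ⟨Y', hsub', hdisj', hunion', hvsp', hcsp'⟩ :=
      IH rest hrest_len hndrest hprest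
        (fun j hj => hv0 j (by rw [← hsplit]; exact List.mem_append_right _ hj))
        (fun j hj => hc0 j (by rw [← hsplit]; exact List.mem_append_right _ hj))
        (fun j hj => hcm j (by rw [← hsplit]; exact List.mem_append_right _ hj))
    -- loads and sorting permutation
    set L : Fin k → ℝ := fun i => ∑ j ∈ Y' i, c j with hL
    set σ : Equiv.Perm (Fin k) := Tuple.sort L with hσ
    have hmono : Monotone (L ∘ σ) := Tuple.monotone_sort L
    -- the block pieces
    set g : Fin k → Finset ι := fun r =>
      if h : (r : ℕ) < blk'.length then {blk'.get ⟨r, h⟩} else ∅ with hg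
    have hg_sub : ∀ r, g r ⊆ blk'.toFinset := by
      intro r
      by_cases h : (r : ℕ) < blk'.length
      · simp only [hg, dif_pos h]
        intro x hx
        simp only [Finset.mem_singleton] at hx
        subst hx
        exact List.mem_toFinset.mpr (blk'.get_mem _)
      · simp [hg, dif_neg h]
    have hg_disj : ∀ r s : Fin k, r ≠ s → Disjoint (g r) (g s) := by
      intro r s hrs
      by_cases hr : (r : ℕ) < blk'.length
      · by_cases hs : (s : ℕ) < blk'.length
        · simp only [hg, dif_pos hr, dif_pos hs, Finset.disjoint_singleton]
          intro hEq
          have h2 : ((⟨(r:ℕ), hr⟩ : Fin blk'.length)) = ⟨(s:ℕ), hs⟩ :=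
            hndblk'.get_inj_iff.mp hEq
          exact hrs (Fin.ext (by injection h2))
        · simp [hg, dif_neg hs]
      · simp [hg, dif_neg hr]
    have hg_rest_disj : ∀ r i, Disjoint (g r) (Y' i) := by
      intro r i
      refine Finset.disjoint_left.mpr fun x hx hx' => ?_
      have hxb : x ∈ blk := hmem_blk' x (List.mem_toFinset.mp (hg_sub r hx))
      have hxr : x ∈ rest := List.mem_toFinset.mp (hsub' i hx')
      exact hdisjbr _ hxb _ hxr rfl
    set Y : Fin k → Finset ι := fun i => g (σ⁻¹ i) ∪ Y' i with hY
    -- sums split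
    have hsumsplit : ∀ (f : ι → ℝ) (i : Fin k),
        ∑ j ∈ Y i, f j = ∑ j ∈ g (σ⁻¹ i), f j + ∑ j ∈ Y' i, f j := by
      intro f i
      exact Finset.sum_union (hg_rest_disj _ i)
    -- bounds on g-sums for c
    have hxc0 : ∀ r, (0:ℝ) ≤ ∑ j ∈ g r, c j := by
      intro r
      refine Finset.sum_nonneg fun j hj => hc0 j ?_
      exact hmem_blk_l j (hmem_blk' j (List.mem_toFinset.mp (hg_sub r hj)))
    have hxcmax : ∀ r, ∑ j ∈ g r, c j ≤ cmax := by
      intro r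
      by_cases h : (r : ℕ) < blk'.length
      · simp only [hg, dif_pos h, Finset.sum_singleton]
        exact hcm _ (hmem_blk_l _ (hmem_blk' _ (blk'.get_mem _)))
      · simp [hg, dif_neg h, hcmax]
    have hxc_anti : ∀ r s : Fin k, r ≤ s → ∑ j ∈ g s, c j ≤ ∑ j ∈ g r, c j := by
      intro r s hrs
      by_cases hs : (s : ℕ) < blk'.length
      · have hr : (r : ℕ) < blk'.length := lt_of_le_of_lt hrs hs
        simp only [hg, dif_pos hr, dif_pos hs, Finset.sum_singleton]
        rcases eq_or_lt_of_le hrs with h | h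
        · subst h
          exact le_refl _
        · exact hsortc.rel_get_of_lt (Fin.mk_lt_mk.mpr h)
      · simp only [hg, dif_neg hs]
        rw [Finset.sum_empty]; exact hxc0 r
    -- bounds on g-sums for v
    have hxv0 : ∀ r, (0:ℝ) ≤ ∑ j ∈ g r, v j := by
      intro r
      refine Finset.sum_nonneg fun j hj => hv0 j ?_
      exact hmem_blk_l j (hmem_blk' j (List.mem_toFinset.mp (hg_sub r hj)))
    have hhead_max : ∀ j ∈ l, v j ≤ v a := by
      intro j hj
      rcases List.mem_cons.mp hj with h | h
      · subst h; exact le_refl _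
      · exact List.rel_of_pairwise_cons hsort h
    have hxv_le_head : ∀ r, ∑ j ∈ g r, v j ≤ v a := by
      intro r
      by_cases h : (r : ℕ) < blk'.length
      · simp only [hg, dif_pos h, Finset.sum_singleton]
        exact hhead_max _ (hmem_blk_l _ (hmem_blk' _ (blk'.get_mem _)))
      · simp only [hg, dif_neg h, Finset.sum_empty]
        exact hv0 a (List.mem_cons_self)
    have hxv_ge : ∀ r, vhead v rest ≤ ∑ j ∈ g r, v j := by
      intro r
      by_cases hre : rest = []
      · rw [hre]; simpa [vhead] using hxv0 r
      · obtain ⟨b, t', hbt⟩ := List.exists_cons_of_ne_nil hre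
        have hfull : blk'.length = k := by
          have hld : rest.length = l.length - k := by rw [hrest, List.length_drop]
          have hrpos : 0 < rest.length := by rw [hbt]; simp
          have hkl : k ≤ l.length := by omega
          rw [List.length_insertionSort, List.length_take]
          omega
        have hrk : (r : ℕ) < blk'.length := by rw [hfull]; exact r.isLt
        rw [hbt]
        simp only [hg, dif_pos hrk, Finset.sum_singleton, vhead]
        refine hcross _ (hmem_blk' _ (blk'.get_mem _)) b ?_
        rw [hbt]; exact List.mem_cons_self
    refine ⟨Y, ?_, ?_, ?_, ?_, ?_⟩
    · -- subsets
      intro i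
      intro x hx
      rcases Finset.mem_union.mp hx with h | h
      · exact List.mem_toFinset.mpr (hmem_blk_l _ (hmem_blk' _ (List.mem_toFinset.mp (hg_sub _ h))))
      · have := hsub' i h
        rw [List.mem_toFinset] at this ⊢
        rw [← hsplit]; exact List.mem_append_right _ this
    · -- disjoint
      intro i i' hne
      rw [hY]
      simp only [Finset.disjoint_union_left, Finset.disjoint_union_right]
      refine ⟨⟨hg_disj _ _ (fun h => hne (by simpa using congrArg σ h)), (hg_rest_disj _ _).symm⟩,
        ⟨hg_rest_disj _ _, hdisj' i i' hne⟩⟩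
    · -- union
      ext x
      simp only [Finset.mem_biUnion, Finset.mem_univ, true_and, hY, Finset.mem_union]
      constructor
      · rintro ⟨i, h | h⟩
        · exact List.mem_toFinset.mpr (hmem_blk_l _ (hmem_blk' _ (List.mem_toFinset.mp (hg_sub _ h))))
        · have := hsub' i h
          rw [List.mem_toFinset] at this ⊢
          rw [← hsplit]; exact List.mem_append_right _ this
      · intro hx
        rw [List.mem_toFinset, ← hsplit, List.mem_append] at hx
        rcases hx with hx | hx
        · have hx' : x ∈ blk' := hperm.mem_iff.mpr hx
          obtain ⟨m, hm⟩ := List.mem_iff_get.mp hx'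
          have hmk : (m : ℕ) < k := lt_of_lt_of_le m.isLt hlen_blk'
          refine ⟨σ ⟨m, hmk⟩, Or.inl ?_⟩
          have : σ⁻¹ (σ ⟨m, hmk⟩) = ⟨m, hmk⟩ := by simp
          rw [this]
          simp only [hg, dif_pos (show ((⟨m, hmk⟩ : Fin k) : ℕ) < blk'.length from m.isLt)]
          simp [← hm]
        · have hx' : x ∈ rest.toFinset := List.mem_toFinset.mpr hx
          rw [← hunion'] at hx'
          obtain ⟨i, _, hi⟩ := Finset.mem_biUnion.mp hx'
          exact ⟨i, Or.inr hi⟩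
    · -- v spread
      intro i i'
      rw [hsumsplit, hsumsplit]
      have h1 := hvsp' i i'
      have h2 := hxv_le_head (σ⁻¹ i)
      have h3 := hxv_ge (σ⁻¹ i')
      have : vhead v l = v a := rfl
      rw [this]
      linarith
    · -- c spread
      intro i i'
      rw [hsumsplit, hsumsplit]
      rcases le_total (σ⁻¹ i) (σ⁻¹ i') with h | h
      · have hLle : L i ≤ L i' := by
          have := hmono h
          simpa using this
        have := hxcmax (σ⁻¹ i)
        have := hxc0 (σ⁻¹ i')
        simp only [hL] at hLle
        linarith
      · have := hxc_anti _ _ h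
        have := hcsp' i i'
        linarith

/-- A set `T` of items whose values are all below `V/k³` and whose costs are all at
most `B/k⁴` can be partitioned into `k` sets, each of value at most
`v(T)/k + 4V/k³` and cost at most `c(T)/k + 4B/k⁴`. -/
theorem light_items_balanced_partition {ι : Type*} [DecidableEq ι]
    (T : Finset ι) (c v : ι → ℝ)
    (hc : ∀ j, 0 ≤ c j) (hv : ∀ j, 0 ≤ v j)
    (k : ℕ) (hk : 0 < k) (V B : ℝ) (hV : 0 < V) (hB : ∑ j ∈ T, c j ≤ B)
    (hlight : ∀ j ∈ T, v j < V / (k : ℝ) ^ 3)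
    (hsmall : ∀ j ∈ T, c j ≤ B / (k : ℝ) ^ 4) :
    ∃ Y : Fin k → Finset ι,
      (∀ i, Y i ⊆ T) ∧
      (∀ i i', i ≠ i' → Disjoint (Y i) (Y i')) ∧
      Finset.univ.biUnion Y = T ∧
      (∀ i, ∑ j ∈ Y i, v j ≤ (∑ j ∈ T, v j) / k + 4 * V / (k : ℝ) ^ 3) ∧
      (∀ i, ∑ j ∈ Y i, c j ≤ (∑ j ∈ T, c j) / k + 4 * B / (k : ℝ) ^ 4) := by
  have hkR : (0 : ℝ) < (k : ℝ) := by exact_mod_cast hk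
  have hB0 : (0 : ℝ) ≤ B :=
    le_trans (Finset.sum_nonneg fun j _ => hc j) hB
  have hk3 : (0 : ℝ) < (k : ℝ) ^ 3 := by positivity
  have hk4 : (0 : ℝ) < (k : ℝ) ^ 4 := by positivity
  set cmax : ℝ := B / (k : ℝ) ^ 4 with hcmaxdef
  have hcmax : (0 : ℝ) ≤ cmax := by positivity
  -- sort the elements of T by value, descending
  set l : List ι := List.insertionSort (fun a b => v b ≤ v a) T.toList with hldef
  have hperm : List.Perm l T.toList := List.perm_insertionSort _ _
  have hmem : ∀ j, j ∈ l ↔ j ∈ T := by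
    intro j
    rw [hperm.mem_iff, Finset.mem_toList]
  have hnd : l.Nodup := hperm.nodup_iff.mpr T.nodup_toList
  have hsorted : l.Pairwise (fun a b => v b ≤ v a) := by
    haveI : IsTotal ι (fun a b => v b ≤ v a) := ⟨fun a b => le_total (v b) (v a)⟩
    haveI : IsTrans ι (fun a b => v b ≤ v a) := ⟨fun _ _ _ h1 h2 => le_trans h2 h1⟩
    exact List.pairwise_insertionSort _ _
  have hltf : l.toFinset = T := by
    rw [List.toFinset_eq_of_perm _ _ hperm, Finset.toList_toFinset]
  obtain ⟨Y, hsub, hdisj, hunion, hvsp, hcsp⟩ :=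
    light_aux c v k hk cmax hcmax l.length l le_rfl hnd hsorted
      (fun j _ => hv j) (fun j _ => hc j)
      (fun j hj => hsmall j ((hmem j).mp hj))
  rw [hltf] at hsub hunion
  -- total sums over the partition
  have hpd : ∀ (f : ι → ℝ), ∑ i, ∑ j ∈ Y i, f j = ∑ j ∈ T, f j := by
    intro f
    rw [← hunion, Finset.sum_biUnion]
    intro i _ i' _ hne
    exact hdisj i i' hne
  -- from spread bounds to average bounds
  have key : ∀ (f : ι → ℝ) (bd : ℝ),
      (∀ i i', ∑ j ∈ Y i, f j ≤ ∑ j ∈ Y i', f j + bd) →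
      ∀ i, ∑ j ∈ Y i, f j ≤ (∑ j ∈ T, f j) / k + bd := by
    intro f bd hsp i
    have hsum : ∑ i' : Fin k, ∑ j ∈ Y i, f j ≤
        ∑ i' : Fin k, (∑ j ∈ Y i', f j + bd) :=
      Finset.sum_le_sum fun i' _ => hsp i i'
    rw [Finset.sum_const, Finset.sum_add_distrib, Finset.sum_const, hpd f] at hsum
    simp only [Finset.card_univ, Fintype.card_fin, nsmul_eq_mul] at hsum
    have h1 : ∑ j ∈ Y i, f j ≤ (∑ j ∈ T, f j + (k : ℝ) * bd) / k := by
      rw [le_div_iff₀ hkR]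
      linarith
    have h2 : (∑ j ∈ T, f j + (k : ℝ) * bd) / k = (∑ j ∈ T, f j) / k + bd := by
      field_simp
    linarith
  -- bound the head value
  have hvhead : vhead v l ≤ 4 * V / (k : ℝ) ^ 3 := by
    match l with
    | [] =>
      simp only [vhead]
      positivity
    | a :: t =>
      have ha : a ∈ T := (hmem a).mp (List.mem_cons_self)
      have h1 : v a < V / (k : ℝ) ^ 3 := hlight a ha
      have h4 : 4 * V / (k : ℝ) ^ 3 = 4 * (V / (k : ℝ) ^ 3) := by ring
      have hpos : (0:ℝ) < V / (k:ℝ)^3 := by positivity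
      simp only [vhead]
      linarith
  have hcmax4 : cmax ≤ 4 * B / (k : ℝ) ^ 4 := by
    rw [hcmaxdef]
    have h4 : 4 * B / (k : ℝ) ^ 4 = 4 * (B / (k : ℝ) ^ 4) := by ring
    have hpos : (0:ℝ) ≤ B / (k:ℝ)^4 := by positivity
    linarith
  refine ⟨Y, hsub, hdisj, hunion, ?_, ?_⟩
  · intro i
    exact le_trans (key v (vhead v l) hvsp i) (by linarith)
  · intro i
    exact le_trans (key c cmax hcsp i) (by linarith)
end

section
/- For any finite set T of items with additive values and costs, and any integer k ≥ 1, T admits a fractional partition into k parts Y_1, ..., Y_k of equal total cost c(T)/k and equal total value v(T)/k, such that each part contains at most 4 fractionally-assigned items (all other items are assigned entirely to one part). -/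
open Finset

namespace FEP

noncomputable def cl (P : ℕ → ℝ) (i : ℕ) (x : ℝ) : ℝ := max (min x (P (i+1))) (P i)

noncomputable def sval (P ρ : ℕ → ℝ) (n : ℕ) (x y : ℝ) : ℝ :=
  ∑ i ∈ Finset.range n, ρ i * (cl P i y - cl P i x)

variable {P ρ : ℕ → ℝ} {n : ℕ}

lemma cl_mono (i : ℕ) {x y : ℝ} (h : x ≤ y) : cl P i x ≤ cl P i y :=
  max_le_max (min_le_min h le_rfl) le_rfl

lemma le_cl (i : ℕ) (x : ℝ) : P i ≤ cl P i x := le_max_right _ _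

lemma cl_le (hP : Monotone P) (i : ℕ) (x : ℝ) : cl P i x ≤ P (i+1) :=
  max_le (min_le_right _ _) (hP (Nat.le_succ i))

lemma cl_of_le {i : ℕ} {x : ℝ} (h : x ≤ P i) : cl P i x = P i :=
  max_eq_right (le_trans (min_le_left _ _) h)

lemma cl_of_ge (hP : Monotone P) {i : ℕ} {x : ℝ} (h : P (i+1) ≤ x) : cl P i x = P (i+1) := by
  rw [cl, min_eq_right h, max_eq_left (hP (Nat.le_succ i))]

lemma cl_continuous (i : ℕ) : Continuous (cl P i) :=
  (continuous_id.min continuous_const).max continuous_const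

lemma sum_cl (hP : Monotone P) (u : ℝ) :
    ∀ m : ℕ, ∑ i ∈ Finset.range m, (cl P i u - P i) = max (min u (P m)) (P 0) - P 0 := by
  intro m
  induction m with
  | zero => simp [max_eq_right (min_le_right u (P 0))]
  | succ m ih =>
      rw [Finset.sum_range_succ, ih]
      have h0m : P 0 ≤ P m := hP (Nat.zero_le m)
      have hmm : P m ≤ P (m+1) := hP (Nat.le_succ m)
      rcases le_total u (P m) with h | h
      · rw [min_eq_left (h.trans hmm), cl_of_le h, min_eq_left h]
        ring
      · rw [min_eq_right h, max_eq_left h0m]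
        rcases le_total u (P (m+1)) with h2 | h2
        · have : cl P m u = u := by
            rw [cl, min_eq_left h2, max_eq_left h]
          rw [this, min_eq_left h2, max_eq_left ((h0m.trans h))]
          ring
        · rw [cl_of_ge hP h2, min_eq_right h2, max_eq_left (h0m.trans hmm)]
          ring

lemma sum_O (hP : Monotone P) (hP0 : P 0 = 0) {x y : ℝ}
    (hx : 0 ≤ x) (hxP : x ≤ P n) (hy : 0 ≤ y) (hyP : y ≤ P n) :
    ∑ i ∈ Finset.range n, (cl P i y - cl P i x) = y - x := by
  have key : ∀ u : ℝ, 0 ≤ u → u ≤ P n →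
      ∑ i ∈ Finset.range n, (cl P i u - P i) = u := by
    intro u h0 h1
    rw [sum_cl hP u n, hP0, min_eq_left h1, max_eq_left h0, sub_zero]
  have h2 := key x hx hxP
  have h3 := key y hy hyP
  have : ∑ i ∈ Finset.range n, (cl P i y - cl P i x)
      = (∑ i ∈ Finset.range n, (cl P i y - P i)) - ∑ i ∈ Finset.range n, (cl P i x - P i) := by
    rw [← Finset.sum_sub_distrib]; apply Finset.sum_congr rfl; intro i _; ring
  rw [this, h2, h3]

lemma sval_add (x y z : ℝ) : sval P ρ n x y + sval P ρ n y z = sval P ρ n x z := by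
  unfold sval
  rw [← Finset.sum_add_distrib]
  apply Finset.sum_congr rfl; intro i _; ring

lemma sval_self (x : ℝ) : sval P ρ n x x = 0 := by
  unfold sval; simp

lemma exchange (hP : Monotone P) (hρ : ∀ ⦃i i'⦄, i ≤ i' → i' < n → ρ i' ≤ ρ i)
    {x m y : ℝ} (hxm : x ≤ m) (hmy : m ≤ y) :
    (∑ i ∈ Finset.range n, (cl P i m - cl P i x)) * sval P ρ n m y ≤
      sval P ρ n x m * (∑ i ∈ Finset.range n, (cl P i y - cl P i m)) := by
  unfold sval
  rw [Finset.sum_mul_sum, Finset.sum_mul_sum]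
  apply Finset.sum_le_sum
  intro i hi
  apply Finset.sum_le_sum
  intro i' hi'
  have hA : 0 ≤ cl P i m - cl P i x := sub_nonneg.2 (cl_mono i hxm)
  have hB : 0 ≤ cl P i' y - cl P i' m := sub_nonneg.2 (cl_mono i' hmy)
  rcases hA.eq_or_lt with hA0 | hA0
  · rw [← hA0]; ring_nf; rfl
  rcases hB.eq_or_lt with hB0 | hB0
  · rw [← hB0]; ring_nf; rfl
  -- both positive: derive P i < m and m < P (i'+1)
  have h1 : P i < m := by
    have : P i < cl P i m := lt_of_le_of_lt (le_cl i x) (by linarith)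
    have : P i < min m (P (i+1)) := by
      rcases lt_max_iff.1 this with h | h
      · exact h
      · exact absurd h (lt_irrefl _)
    exact lt_of_lt_of_le this (min_le_left _ _)
  have h2 : m < P (i'+1) := by
    have hcl : cl P i' m < P (i'+1) := lt_of_lt_of_le (by linarith) (cl_le hP i' y)
    have : min m (P (i'+1)) < P (i'+1) := lt_of_le_of_lt (le_max_left _ _) hcl
    rcases min_lt_iff.1 this with h | h
    · exact h
    · exact absurd h (lt_irrefl _)
  have hρle : ρ i' ≤ ρ i := by
    rcases le_or_gt i i' with h | h
    · exact hρ h (Finset.mem_range.1 hi')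
    · exfalso
      have : P (i'+1) ≤ P i := hP h
      linarith
  calc (cl P i m - cl P i x) * (ρ i' * (cl P i' y - cl P i' m))
      = ρ i' * ((cl P i m - cl P i x) * (cl P i' y - cl P i' m)) := by ring
    _ ≤ ρ i * ((cl P i m - cl P i x) * (cl P i' y - cl P i' m)) :=
        mul_le_mul_of_nonneg_right hρle (mul_nonneg hA hB)
    _ = ρ i * (cl P i m - cl P i x) * (cl P i' y - cl P i' m) := by ring

lemma step (hP : Monotone P) (hP0 : P 0 = 0)
    (hρ : ∀ ⦃i i'⦄, i ≤ i' → i' < n → ρ i' ≤ ρ i)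
    {a b p q0 : ℝ} {m : ℕ}
    (ha : 0 ≤ a) (hab : a ≤ b) (hb : b ≤ P n) (hp : 0 ≤ p)
    (hlen : b - a = (m+1) * p) (hval : sval P ρ n a b = (m+1) * q0) :
    ∃ s t : ℝ, a ≤ s ∧ s ≤ t ∧ t ≤ b ∧ (s - a) + (b - t) = p ∧ t - s = m * p ∧
      sval P ρ n a s + sval P ρ n t b = q0 := by
  have hm1 : (0:ℝ) < (m:ℝ) + 1 := by positivity
  rcases hp.eq_or_lt with hp0 | hp0
  · -- p = 0
    refine ⟨a, b, le_refl a, hab, le_refl b, by linarith, by nlinarith, ?_⟩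
    have hba : b = a := by nlinarith
    subst hba
    rw [sval_self] at hval ⊢
    have hq : q0 = 0 := by
      rcases mul_eq_zero.1 hval.symm with h | h
      · linarith
      · exact h
    rw [hq]; ring
  · -- p > 0
    set d : ℝ := b - a - p with hd
    have hd0 : 0 ≤ d := by nlinarith
    have hdm : d = m * p := by rw [hd]; nlinarith
    set G : ℝ → ℝ := fun s => sval P ρ n a s + sval P ρ n (s + d) b with hG
    have hap : a + p ≤ b := by nlinarith
    -- bounds on G a and G (a+p)
    have hs1 : sval P ρ n a a = 0 := sval_self a
    have hGa : G a = sval P ρ n (b - p) b := by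
      simp only [hG]; rw [sval_self]
      have : a + d = b - p := by rw [hd]; ring
      rw [this]; ring
    have hGap : G (a+p) = sval P ρ n a (a+p) := by
      simp only [hG]
      have : a + p + d = b := by rw [hd]; ring
      rw [this, sval_self]; ring
    -- exchange inequalities
    have hcost1 : ∑ i ∈ Finset.range n, (cl P i (a+p) - cl P i a) = p := by
      rw [sum_O hP hP0 ha (hab.trans hb) (by linarith) (hap.trans hb)]; ring
    have hcost2 : ∑ i ∈ Finset.range n, (cl P i b - cl P i (a+p)) = m * p := by
      rw [sum_O hP hP0 (by linarith) (hap.trans hb) (ha.trans hab) hb]; nlinarith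
    have hex1 := exchange hP hρ (show a ≤ a + p by linarith) hap
    rw [hcost1, hcost2] at hex1
    have hsplit1 : sval P ρ n a (a+p) + sval P ρ n (a+p) b = (m+1) * q0 := by
      rw [sval_add]; exact hval
    have hub : q0 ≤ G (a+p) := by
      rw [hGap]
      by_contra hcon
      push_neg at hcon
      have h1 : ((m:ℝ)+1) * p * sval P ρ n a (a+p) < ((m:ℝ)+1) * p * q0 :=
        mul_lt_mul_of_pos_left hcon (by positivity)
      nlinarith
    have hmp : 0 ≤ (m:ℝ) * p := mul_nonneg (Nat.cast_nonneg m) hp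
    have hbp1 : a ≤ b - p := by linarith [hmp]
    have hbp0 : 0 ≤ b - p := le_trans ha hbp1
    have hbpP : b - p ≤ P n := by linarith
    have hcost3 : ∑ i ∈ Finset.range n, (cl P i (b-p) - cl P i a) = m * p := by
      rw [sum_O hP hP0 ha (hab.trans hb) hbp0 hbpP]; linarith [hmp]
    have hcost4 : ∑ i ∈ Finset.range n, (cl P i b - cl P i (b-p)) = p := by
      rw [sum_O hP hP0 hbp0 hbpP (ha.trans hab) hb]; ring
    have hex2 := exchange hP hρ hbp1 (show b - p ≤ b by linarith)
    rw [hcost3, hcost4] at hex2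
    have hsplit2 : sval P ρ n a (b-p) + sval P ρ n (b-p) b = (m+1) * q0 := by
      rw [sval_add]; exact hval
    have hlb : G a ≤ q0 := by
      rw [hGa]
      by_contra hcon
      push_neg at hcon
      have h1 : ((m:ℝ)+1) * p * q0 < ((m:ℝ)+1) * p * sval P ρ n (b-p) b :=
        mul_lt_mul_of_pos_left hcon (by positivity)
      nlinarith
    -- continuity and IVT
    have hcont : Continuous G := by
      simp only [hG]
      unfold sval
      apply Continuous.add
      · apply continuous_finset_sum
        intro i _
        exact continuous_const.mul ((cl_continuous i).sub continuous_const)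
      · apply continuous_finset_sum
        intro i _
        exact continuous_const.mul
          (continuous_const.sub ((cl_continuous i).comp (continuous_id.add continuous_const)))
    have hIVT := intermediate_value_Icc (show a ≤ a + p by linarith) hcont.continuousOn
    have hq0mem : q0 ∈ Set.Icc (G a) (G (a+p)) := ⟨hlb, hub⟩
    obtain ⟨s, hsmem, hGs⟩ := hIVT hq0mem
    refine ⟨s, s + d, hsmem.1, by linarith, by linarith [hsmem.2, hd.ge, hd.le],
      by rw [hd]; ring, by rw [hdm]; ring, hGs⟩

lemma rec_partition (hP : Monotone P) (hP0 : P 0 = 0)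
    (hρ : ∀ ⦃i i'⦄, i ≤ i' → i' < n → ρ i' ≤ ρ i)
    {p q0 : ℝ} (hp : 0 ≤ p) :
    ∀ m : ℕ, ∀ a b : ℝ, 0 ≤ a → a ≤ b → b ≤ P n → b - a = m * p →
      sval P ρ n a b = m * q0 →
      ∃ y : Fin m → ℕ → ℝ,
        (∀ im i, 0 ≤ y im i ∧ y im i ≤ 1) ∧
        (∀ i, ∑ im, y im i * (P (i+1) - P i) = cl P i b - cl P i a) ∧
        (∀ im, ∑ i ∈ Finset.range n, y im i * (P (i+1) - P i) = p) ∧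
        (∀ im, ∑ i ∈ Finset.range n, y im i * (ρ i * (P (i+1) - P i)) = q0) ∧
        (∀ im, ((Finset.range n).filter fun i => 0 < y im i ∧ y im i < 1).card ≤ 4) := by
  intro m
  induction m with
  | zero =>
      intro a b ha hab hb hlen hval
      have hba : b = a := by push_cast at hlen; linarith
      subst hba
      exact ⟨fun im => Fin.elim0 im, fun im => Fin.elim0 im,
        fun i => by simp, fun im => Fin.elim0 im, fun im => Fin.elim0 im,
        fun im => Fin.elim0 im⟩
  | succ m ih =>
      intro a b ha hab hb hlen hval
      obtain ⟨s, t, has, hst, htb, hpart, hts, hq⟩ :=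
        step hP hP0 hρ ha hab hb hp (by push_cast at hlen ⊢; linarith)
          (by push_cast at hval ⊢; linarith)
      have hccnn : ∀ i, 0 ≤ P (i+1) - P i := fun i => sub_nonneg.2 (hP (Nat.le_succ i))
      have hOas : ∀ i, 0 ≤ cl P i s - cl P i a := fun i => sub_nonneg.2 (cl_mono i has)
      have hOst : ∀ i, 0 ≤ cl P i t - cl P i s := fun i => sub_nonneg.2 (cl_mono i hst)
      have hOtb : ∀ i, 0 ≤ cl P i b - cl P i t := fun i => sub_nonneg.2 (cl_mono i htb)
      have hOle : ∀ i, (cl P i s - cl P i a) + (cl P i b - cl P i t) ≤ P (i+1) - P i := by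
        intro i
        have h1 : P i ≤ cl P i a := le_cl i a
        have h2 : cl P i b ≤ P (i+1) := cl_le hP i b
        linarith [hOst i]
      set y0 : ℕ → ℝ :=
        fun i => ((cl P i s - cl P i a) + (cl P i b - cl P i t)) / (P (i+1) - P i) with hy0
      have hy0key : ∀ i, y0 i * (P (i+1) - P i)
          = (cl P i s - cl P i a) + (cl P i b - cl P i t) := by
        intro i
        rcases eq_or_lt_of_le (hccnn i) with h | h
        · have hnum : (cl P i s - cl P i a) + (cl P i b - cl P i t) = 0 :=
            le_antisymm (by linarith [hOle i]) (by linarith [hOas i, hOtb i])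
          simp only [hy0]
          rw [hnum, ← h]
          simp
        · simp only [hy0]
          exact div_mul_cancel₀ _ h.ne'
      have hy0bd : ∀ i, 0 ≤ y0 i ∧ y0 i ≤ 1 := by
        intro i
        constructor
        · exact div_nonneg (add_nonneg (hOas i) (hOtb i)) (hccnn i)
        · exact div_le_one_of_le₀ (hOle i) (hccnn i)
      -- invariants for the middle interval [s, t]
      have hsvalst : sval P ρ n s t = m * q0 := by
        have h1 := sval_add (P := P) (ρ := ρ) (n := n) a s t
        have h2 := sval_add (P := P) (ρ := ρ) (n := n) a t b
        push_cast at hval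
        linarith
      obtain ⟨y', hbd', hcol', hcost', hval', hcard'⟩ :=
        ih s t (ha.trans has) hst (htb.trans hb) hts hsvalst
      refine ⟨Fin.cons y0 y', ?_, ?_, ?_, ?_, ?_⟩
      · intro im i
        induction im using Fin.cases with
        | zero => simpa using hy0bd i
        | succ im' => simpa using hbd' im' i
      · intro i
        rw [Fin.sum_univ_succ]
        simp only [Fin.cons_zero, Fin.cons_succ]
        rw [hy0key i, hcol' i]
        ring
      · intro im
        induction im using Fin.cases with
        | zero =>
            simp only [Fin.cons_zero]
            have hsum : ∑ i ∈ Finset.range n, y0 i * (P (i+1) - P i)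
                = (∑ i ∈ Finset.range n, (cl P i s - cl P i a))
                  + ∑ i ∈ Finset.range n, (cl P i b - cl P i t) := by
              rw [← Finset.sum_add_distrib]
              exact Finset.sum_congr rfl fun i _ => hy0key i
            rw [hsum, sum_O hP hP0 ha (hab.trans hb) (ha.trans has) ((hst.trans htb).trans hb),
              sum_O hP hP0 (ha.trans (has.trans hst)) (htb.trans hb) (ha.trans hab) hb]
            linarith
        | succ im' => simpa using hcost' im'
      · intro im
        induction im using Fin.cases with
        | zero =>
            simp only [Fin.cons_zero]
            have hsum : ∀ i ∈ Finset.range n, y0 i * (ρ i * (P (i+1) - P i))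
                = ρ i * (cl P i s - cl P i a) + ρ i * (cl P i b - cl P i t) := by
              intro i _
              have : y0 i * (ρ i * (P (i+1) - P i)) = ρ i * (y0 i * (P (i+1) - P i)) := by ring
              rw [this, hy0key i]
              ring
            rw [Finset.sum_congr rfl hsum, Finset.sum_add_distrib]
            unfold sval at hq
            exact hq
        | succ im' => simpa using hval' im'
      · intro im
        induction im using Fin.cases with
        | zero =>
            simp only [Fin.cons_zero]
            have hone : ∀ x : ℝ,
                ((Finset.range n).filter fun i => P i < x ∧ x < P (i+1)).card ≤ 1 := by
              intro x
              rw [Finset.card_le_one]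
              intro i hi i' hi'
              rw [Finset.mem_filter] at hi hi'
              rcases lt_trichotomy i i' with h | h | h
              · exfalso
                have : P (i+1) ≤ P i' := hP h
                linarith [hi.2.2, hi'.2.1]
              · exact h
              · exfalso
                have : P (i'+1) ≤ P i := hP h
                linarith [hi'.2.2, hi.2.1]
            have hsub : ((Finset.range n).filter fun i => 0 < y0 i ∧ y0 i < 1) ⊆
                (((Finset.range n).filter fun i => P i < a ∧ a < P (i+1)) ∪
                 ((Finset.range n).filter fun i => P i < s ∧ s < P (i+1))) ∪
                (((Finset.range n).filter fun i => P i < t ∧ t < P (i+1)) ∪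
                 ((Finset.range n).filter fun i => P i < b ∧ b < P (i+1))) := by
              intro i hi
              rw [Finset.mem_filter] at hi
              obtain ⟨hin, hy0pos, hy0lt⟩ := hi
              have hccpos : 0 < P (i+1) - P i := by
                rcases eq_or_lt_of_le (hccnn i) with h | h
                · exfalso
                  have : y0 i = 0 := by
                    simp only [hy0]
                    rw [← h, div_zero]
                  rw [this] at hy0pos
                  exact lt_irrefl 0 hy0pos
                · exact h
              have hnumpos : 0 < (cl P i s - cl P i a) + (cl P i b - cl P i t) := by
                rw [← hy0key i]; exact mul_pos hy0pos hccpos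
              have hnumlt : (cl P i s - cl P i a) + (cl P i b - cl P i t) < P (i+1) - P i := by
                rw [← hy0key i]
                calc y0 i * (P (i+1) - P i) < 1 * (P (i+1) - P i) :=
                      mul_lt_mul_of_pos_right hy0lt hccpos
                  _ = P (i+1) - P i := one_mul _
              by_contra hcon
              simp only [Finset.mem_union, Finset.mem_filter, not_or] at hcon
              have hcl : ∀ x : ℝ, ¬(i ∈ Finset.range n ∧ P i < x ∧ x < P (i+1)) →
                  cl P i x = P i ∨ cl P i x = P (i+1) := by
                intro x hx
                rcases not_and_or.1 hx with h | h
                · exact absurd hin h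
                · rcases not_and_or.1 h with h' | h'
                  · left; exact cl_of_le (not_lt.1 h')
                  · right; exact cl_of_ge hP (not_lt.1 h')
              obtain ⟨⟨hca, hcs⟩, hct, hcb⟩ := hcon
              have hba := hcl a hca
              have hbs := hcl s hcs
              have hbt := hcl t hct
              have hbb := hcl b hcb
              have m1 : cl P i a ≤ cl P i s := cl_mono i has
              have m2 : cl P i s ≤ cl P i t := cl_mono i hst
              have m3 : cl P i t ≤ cl P i b := cl_mono i htb
              rcases hba with h1 | h1 <;> rcases hbs with h2 | h2 <;>
                rcases hbt with h3 | h3 <;> rcases hbb with h4 | h4 <;> linarith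
            calc ((Finset.range n).filter fun i => 0 < y0 i ∧ y0 i < 1).card
                ≤ _ := Finset.card_le_card hsub
              _ ≤ _ + _ := Finset.card_union_le _ _
              _ ≤ 4 := by
                  have c1 := Finset.card_union_le
                    ((Finset.range n).filter fun i => P i < a ∧ a < P (i+1))
                    ((Finset.range n).filter fun i => P i < s ∧ s < P (i+1))
                  have c2 := Finset.card_union_le
                    ((Finset.range n).filter fun i => P i < t ∧ t < P (i+1))
                    ((Finset.range n).filter fun i => P i < b ∧ b < P (i+1))
                  have := hone a
                  have := hone s
                  have := hone t
                  have := hone b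
                  omega
        | succ im' => simpa using hcard' im'

end FEP

open FEP

/-- Any finite set `T` of items with nonnegative values and positive costs admits a
fractional partition into `k` parts of equal total cost `c(T)/k` and equal total
value `v(T)/k`, with at most `4` fractionally-assigned items per part. -/
theorem fractional_even_partition {ι : Type*} [DecidableEq ι]
    (T : Finset ι) (v c : ι → ℝ)
    (hv : ∀ j ∈ T, 0 ≤ v j) (hc : ∀ j ∈ T, 0 < c j)
    (k : ℕ) (hk : 1 ≤ k) :
    ∃ y : Fin k → ι → ℝ,
      (∀ i j, 0 ≤ y i j ∧ y i j ≤ 1) ∧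
      (∀ j ∈ T, ∑ i, y i j = 1) ∧
      (∀ i, ∑ j ∈ T, y i j * c j = (∑ j ∈ T, c j) / k) ∧
      (∀ i, ∑ j ∈ T, y i j * v j = (∑ j ∈ T, v j) / k) ∧
      (∀ i, (T.filter (fun j => 0 < y i j ∧ y i j < 1)).card ≤ 4) := by
  classical
  set r : ι → ι → Prop := fun a b => v b / c b ≤ v a / c a with hr
  haveI : DecidableRel r := fun a b => Classical.dec _
  haveI hTot : IsTotal ι r := ⟨fun a b => le_total _ _⟩
  haveI hTrans : IsTrans ι r := ⟨fun a b d h1 h2 => le_trans h2 h1⟩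
  set l : List ι := List.insertionSort r T.toList with hl
  have hsort : l.Pairwise r := List.pairwise_insertionSort r T.toList
  have hperm : l.Perm T.toList := List.perm_insertionSort r T.toList
  have hnd : l.Nodup := hperm.nodup_iff.mpr T.nodup_toList
  have hmem : ∀ j, j ∈ l ↔ j ∈ T := fun j => by rw [hperm.mem_iff, Finset.mem_toList]
  set cc : ℕ → ℝ := fun i => if h : i < l.length then c l[i] else 0 with hcc
  set ρ : ℕ → ℝ := fun i => if h : i < l.length then v l[i] / c l[i] else 0 with hρdef
  set P : ℕ → ℝ := fun m => ∑ i ∈ Finset.range m, cc i with hPdef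
  have hccnn : ∀ i, 0 ≤ cc i := by
    intro i
    simp only [hcc]
    split
    · exact (hc _ ((hmem _).1 (List.getElem_mem _))).le
    · exact le_refl 0
  have hccpos : ∀ i, i < l.length → 0 < cc i := by
    intro i hi
    simp only [hcc, dif_pos hi]
    exact hc _ ((hmem _).1 (List.getElem_mem _))
  have hPmono : Monotone P := by
    intro i i' h
    simp only [hPdef]
    exact Finset.sum_le_sum_of_subset_of_nonneg (Finset.range_subset_range.2 h)
      (fun j _ _ => hccnn j)
  have hP0 : P 0 = 0 := by simp [hPdef]
  have hPsucc : ∀ i, P (i+1) - P i = cc i := by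
    intro i
    simp only [hPdef, Finset.sum_range_succ]
    ring
  have hρmono : ∀ ⦃i i'⦄, i ≤ i' → i' < l.length → ρ i' ≤ ρ i := by
    intro i i' hii hi'
    have hi : i < l.length := lt_of_le_of_lt hii hi'
    simp only [hρdef, dif_pos hi, dif_pos hi']
    rcases eq_or_lt_of_le hii with h | h
    · subst h; exact le_refl _
    · have := hsort.rel_get_of_lt (a := ⟨i, hi⟩) (b := ⟨i', hi'⟩) (Fin.mk_lt_mk.mpr h)
      simp only [hr, List.get_eq_getElem] at this
      exact this
  have hbridge : ∀ F : ι → ℝ, ∑ j ∈ T, F j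
      = ∑ i ∈ Finset.range l.length, (if h : i < l.length then F l[i] else 0) := by
    intro F
    rw [← Finset.sum_map_toList, ← ((hperm.map F).sum_eq : (l.map F).sum = _)]
    conv_lhs => rw [← List.ofFn_get l, List.map_ofFn, List.sum_ofFn]
    rw [← Fin.sum_univ_eq_sum_range (fun i => if h : i < l.length then F l[i] else 0) l.length]
    apply Finset.sum_congr rfl
    intro i _
    simp [List.get_eq_getElem]
  -- key clamp values
  have hclC : ∀ i, i < l.length → cl P i (P l.length) = P (i+1) :=
    fun i hi => cl_of_ge hPmono (hPmono hi)
  have hcl0 : ∀ i, cl P i 0 = P i :=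
    fun i => cl_of_le (hP0 ▸ hPmono (Nat.zero_le i))
  have hsvalC : sval P ρ l.length 0 (P l.length) = ∑ j ∈ T, v j := by
    unfold sval
    rw [hbridge v]
    apply Finset.sum_congr rfl
    intro i hi
    have hi' : i < l.length := Finset.mem_range.1 hi
    rw [dif_pos hi', hclC i hi', hcl0 i, hPsucc i]
    simp only [hρdef, hcc, dif_pos hi']
    exact div_mul_cancel₀ _ (hc _ ((hmem _).1 (List.getElem_mem _))).ne'
  have hk0 : ((k:ℝ)) ≠ 0 := by
    have : (0:ℝ) < k := by exact_mod_cast hk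
    exact this.ne'
  have hCP : P l.length = ∑ j ∈ T, c j := by
    rw [hbridge c]
  have hp : 0 ≤ (∑ j ∈ T, c j) / k :=
    div_nonneg (Finset.sum_nonneg fun j hj => (hc j hj).le) (by positivity)
  obtain ⟨y', hbd', hcol', hcost', hval', hcard'⟩ :=
    rec_partition hPmono hP0 hρmono hp k 0 (P l.length)
      le_rfl (hP0 ▸ hPmono (Nat.zero_le l.length)) le_rfl
      (by rw [hCP, sub_zero, mul_comm, div_mul_cancel₀ _ hk0])
      (by rw [hsvalC, mul_comm, div_mul_cancel₀ _ hk0])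
  set Y : Fin k → ι → ℝ := fun im j => if h : j ∈ l then y' im (l.idxOf j) else 0 with hY
  have hYval : ∀ im j (h : j ∈ l), Y im j = y' im (l.idxOf j) := by
    intro im j h
    simp only [hY, dif_pos h]
  refine ⟨Y, ?_, ?_, ?_, ?_, ?_⟩
  · intro im j
    by_cases h : j ∈ l
    · rw [hYval im j h]; exact hbd' im _
    · simp only [hY, dif_neg h]; norm_num
  · intro j hj
    have hjl : j ∈ l := (hmem j).2 hj
    have hi0 : l.idxOf j < l.length := List.idxOf_lt_length_iff.2 hjl
    have hcol := hcol' (l.idxOf j)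
    rw [hPsucc, hclC _ hi0, hcl0, hPsucc] at hcol
    have hsum : (∑ im, y' im (l.idxOf j)) * cc (l.idxOf j) = 1 * cc (l.idxOf j) := by
      rw [Finset.sum_mul, one_mul]
      exact hcol
    have := mul_right_cancel₀ (hccpos _ hi0).ne' hsum
    calc ∑ im, Y im j = ∑ im, y' im (l.idxOf j) :=
          Finset.sum_congr rfl fun im _ => hYval im j hjl
      _ = 1 := this
  · intro im
    rw [hbridge (fun j => Y im j * c j)]
    have := hcost' im
    calc ∑ i ∈ Finset.range l.length, (if h : i < l.length then Y im l[i] * c l[i] else 0)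
        = ∑ i ∈ Finset.range l.length, y' im i * (P (i+1) - P i) := by
          apply Finset.sum_congr rfl
          intro i hi
          have hi' : i < l.length := Finset.mem_range.1 hi
          rw [dif_pos hi', hYval im _ (List.getElem_mem _), List.Nodup.idxOf_getElem hnd i hi',
            hPsucc]
          simp only [hcc, dif_pos hi']
      _ = (∑ j ∈ T, c j) / k := hcost' im
  · intro im
    rw [hbridge (fun j => Y im j * v j)]
    calc ∑ i ∈ Finset.range l.length, (if h : i < l.length then Y im l[i] * v l[i] else 0)
        = ∑ i ∈ Finset.range l.length, y' im i * (ρ i * (P (i+1) - P i)) := by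
          apply Finset.sum_congr rfl
          intro i hi
          have hi' : i < l.length := Finset.mem_range.1 hi
          rw [dif_pos hi', hYval im _ (List.getElem_mem _), List.Nodup.idxOf_getElem hnd i hi',
            hPsucc]
          simp only [hρdef, hcc, dif_pos hi']
          rw [div_mul_cancel₀ _ (hc _ ((hmem _).1 (List.getElem_mem _))).ne']
      _ = (∑ j ∈ T, v j) / k := hval' im
  · intro im
    have hinj : (T.filter fun j => 0 < Y im j ∧ Y im j < 1).card ≤
        ((Finset.range l.length).filter fun i => 0 < y' im i ∧ y' im i < 1).card := by
      apply Finset.card_le_card_of_injOn (fun j => l.idxOf j)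
      · intro j hj
        rw [Finset.mem_coe, Finset.mem_filter] at hj
        have hjl : j ∈ l := (hmem j).2 hj.1
        have hfrac := hj.2
        rw [hYval im j hjl] at hfrac
        exact Finset.mem_filter.2
          ⟨Finset.mem_range.2 (List.idxOf_lt_length_iff.2 hjl), hfrac⟩
      · intro j1 h1 j2 h2 he
        have hj1 : j1 ∈ l := (hmem j1).2 (Finset.mem_filter.1 (Finset.mem_coe.1 h1)).1
        have hj2 : j2 ∈ l := (hmem j2).2 (Finset.mem_filter.1 (Finset.mem_coe.1 h2)).1
        exact (List.idxOf_inj hj1).1 he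
    exact le_trans hinj (hcard' im)
end
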